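/- Let M ≥ 1, let γ̄ be an M×M matrix with strictly positive entries, and let ρ, ν ∈ ℝ_{>0}^M be probability vectors. Then there is a unique minimizer γ* of the Kullback–Leibler divergence KL(γ|γ̄) = ∑_{i,j} γ_{ij} log(γ_{ij}/γ̄_{ij}) over all nonnegative M×M matrices γ with row sums ρ (∑_j γ_{ij} = ρ_i for all i) and column sums ν (∑_i γ_{ij} = ν_j for all j), and there exist nonnegative vectors a, b ∈ ℝ_{≥0}^M such that γ*_{ij} = a_i b_j γ̄_{ij} for all i, j. -/

import Mathlib

open Real Filter

/-- The integrand of the KL divergence: `x ↦ x log x - x log c`. -/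
noncomputable def klF (c : ℝ) : ℝ → ℝ := fun x => x * Real.log x - x * Real.log c

lemma klaux_rw (c x : ℝ) (hc : 0 < c) :
    x * Real.log (x / c) = klF c x := by
  unfold klF
  rcases eq_or_ne x 0 with h | h
  · simp [h]
  · rw [Real.log_div h hc.ne']; ring

lemma klF_zero (c : ℝ) : klF c 0 = 0 := by simp [klF]

lemma klF_continuous (c : ℝ) : Continuous (klF c) :=
  Real.continuous_mul_log.sub (continuous_id.mul continuous_const)

lemma klaux_mid_lt (c x y : ℝ) (hx : 0 ≤ x) (hy : 0 ≤ y) (hxy : x ≠ y) :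
    klF c ((x+y)/2) < (klF c x + klF c y) / 2 := by
  have h := Real.strictConvexOn_mul_log.2 (Set.mem_Ici.2 hx) (Set.mem_Ici.2 hy) hxy
    (by norm_num : (0:ℝ) < 1/2) (by norm_num : (0:ℝ) < 1/2) (by norm_num)
  simp only [smul_eq_mul] at h
  unfold klF
  have hxy2 : (x+y)/2 = (1/2)*x + (1/2)*y := by ring
  rw [hxy2]
  nlinarith [h]

lemma klaux_mid_le (c x y : ℝ) (hx : 0 ≤ x) (hy : 0 ≤ y) :
    klF c ((x+y)/2) ≤ (klF c x + klF c y) / 2 := by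
  rcases eq_or_ne x y with h | h
  · subst h; rw [show (x+x)/2 = x by ring]; unfold klF; linarith
  · exact (klaux_mid_lt c x y hx hy h).le

lemma klaux_hasDeriv (c x d : ℝ) (hx : 0 < x) :
    HasDerivAt (fun t : ℝ => klF c (x + t*d)) (d * (Real.log x + 1 - Real.log c)) 0 := by
  have l1 : HasDerivAt (fun t : ℝ => x + t*d) d 0 :=
    (hasDerivAt_mul_const d).const_add x
  have l2 : HasDerivAt (fun y : ℝ => y * Real.log y) (Real.log (x + 0*d) + 1) (x + 0*d) :=
    Real.hasDerivAt_mul_log (by simpa using hx.ne')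
  have l3 := l2.comp 0 l1
  have l4 := l1.mul_const (Real.log c)
  have := l3.sub l4
  have e : (fun t : ℝ => klF c (x + t*d)) =
      ((fun y => y * Real.log y) ∘ fun t => x + t * d) - fun y => (x + y * d) * Real.log c := by
    funext t; simp [klF]
  rw [e]
  exact this.congr_deriv (by simp; ring)

lemma klaux_slope_tendsto (c x d : ℝ) (hx : 0 < x) :
    Tendsto (fun t : ℝ => (klF c (x + t*d) - klF c x) / t) (nhdsWithin 0 (Set.Ioi 0))
      (nhds (d * (Real.log x + 1 - Real.log c))) := by
  have h := (hasDerivAt_iff_tendsto_slope.1 (klaux_hasDeriv c x d hx)).mono_left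
    (nhdsWithin_mono _ (fun t (ht : t ∈ Set.Ioi 0) => ne_of_gt ht))
  refine h.congr' ?_
  filter_upwards [self_mem_nhdsWithin] with t ht
  simp only [slope_def_field, div_eq_inv_mul]
  rw [show x + (0:ℝ)*d = x by ring]
  ring_nf

lemma klaux_zero_slope (c : ℝ) :
    Tendsto (fun t : ℝ => (klF c (0 + t*1) - klF c 0) / t)
      (nhdsWithin 0 (Set.Ioi 0)) atBot := by
  have h : Tendsto (fun t : ℝ => Real.log t - Real.log c) (nhdsWithin 0 (Set.Ioi 0)) atBot :=
    tendsto_atBot_add_const_right _ _ Real.tendsto_log_nhdsGT_zero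
  refine h.congr' ?_
  filter_upwards [self_mem_nhdsWithin] with t (ht : (0:ℝ) < t)
  rw [klF_zero, sub_zero, zero_add, mul_one]
  unfold klF
  field_simp

/-- the cycle direction -/
def klδ {M : ℕ} (i k j l : Fin M) : Fin M → Fin M → ℝ := fun p q =>
  (if p = i then (1:ℝ) else 0) * (if q = j then 1 else 0)
  + (if p = k then 1 else 0) * (if q = l then 1 else 0)
  - (if p = i then 1 else 0) * (if q = l then 1 else 0)
  - (if p = k then 1 else 0) * (if q = j then 1 else 0)

lemma klδ_row {M : ℕ} (i k j l : Fin M) (p : Fin M) : ∑ q, klδ i k j l p q = 0 := by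
  simp [klδ, Finset.sum_add_distrib, Finset.sum_sub_distrib, ite_mul, mul_ite,
    Finset.sum_ite_eq', Finset.mul_sum]

lemma klδ_col {M : ℕ} (i k j l : Fin M) (q : Fin M) : ∑ p, klδ i k j l p q = 0 := by
  simp [klδ, Finset.sum_add_distrib, Finset.sum_sub_distrib, ite_mul, mul_ite,
    Finset.sum_ite_eq', Finset.mul_sum]

lemma klδ_mul_sum {M : ℕ} (i k j l : Fin M) (v : Fin M → Fin M → ℝ) :
    ∑ p, ∑ q, klδ i k j l p q * v p q = v i j + v k l - v i l - v k j := by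
  simp [klδ, add_mul, sub_mul, ite_mul, one_mul, zero_mul,
    Finset.sum_add_distrib, Finset.sum_sub_distrib, Finset.sum_ite_eq',
    Finset.sum_ite_eq]

lemma klδ_vals {M : ℕ} (i k j l : Fin M) (hik : i ≠ k) (hjl : j ≠ l) :
    klδ i k j l i j = 1 ∧ klδ i k j l k l = 1 ∧ klδ i k j l i l = -1 ∧
    klδ i k j l k j = -1 ∧
    ∀ p q, (p ≠ i ∧ p ≠ k) ∨ (q ≠ j ∧ q ≠ l) → klδ i k j l p q = 0 := by
  refine ⟨by simp [klδ, hik, hjl, hik.symm, hjl.symm],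
    by simp [klδ, hik, hjl, hik.symm, hjl.symm],
    by simp [klδ, hik, hjl, hik.symm, hjl.symm],
    by simp [klδ, hik, hjl, hik.symm, hjl.symm], ?_⟩
  rintro p q (⟨h1, h2⟩ | ⟨h1, h2⟩) <;> simp [klδ, h1, h2]

lemma klaux_sum_two {M : ℕ} (j l : Fin M) (hjl : j ≠ l) (f : Fin M → ℝ)
    (h0 : ∀ q, q ≠ j → q ≠ l → f q = 0) : ∑ q, f q = f j + f l := by
  rw [← Finset.sum_subset (Finset.subset_univ ({j, l} : Finset (Fin M)))
    (fun q _ hq => by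
      simp only [Finset.mem_insert, Finset.mem_singleton] at hq
      push_neg at hq
      exact h0 q hq.1 hq.2)]
  rw [Finset.sum_insert (by simp [hjl]), Finset.sum_singleton]

lemma klaux_four_sum {M : ℕ} (i k j l : Fin M) (hik : i ≠ k) (hjl : j ≠ l)
    (w : Fin M → Fin M → ℝ)
    (hw : ∀ p q, ((p ≠ i ∧ p ≠ k) ∨ (q ≠ j ∧ q ≠ l)) → w p q = 0) :
    ∑ p, ∑ q, w p q = w i j + w i l + w k j + w k l := by
  have inner : ∀ p, ∑ q, w p q = w p j + w p l := fun p =>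
    klaux_sum_two j l hjl _ (fun q h1 h2 => hw p q (Or.inr ⟨h1, h2⟩))
  calc ∑ p, ∑ q, w p q = ∑ p, (w p j + w p l) := Finset.sum_congr rfl fun p _ => inner p
    _ = (w i j + w i l) + (w k j + w k l) :=
        klaux_sum_two i k hik _ (fun p h1 h2 => by
          rw [hw p j (Or.inl ⟨h1, h2⟩), hw p l (Or.inl ⟨h1, h2⟩), add_zero])
    _ = w i j + w i l + w k j + w k l := by ring

theorem kl_projection_product_form
    (M : ℕ) (hM : 1 ≤ M)
    (γbar : Fin M → Fin M → ℝ) (hγbar : ∀ i j, 0 < γbar i j)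
    (ρ ν : Fin M → ℝ) (hρ : ∀ i, 0 < ρ i) (hν : ∀ j, 0 < ν j)
    (hρ1 : ∑ i, ρ i = 1) (hν1 : ∑ j, ν j = 1)
    (S : Set (Fin M → Fin M → ℝ))
    (hS : S = {γ | (∀ i j, 0 ≤ γ i j) ∧ (∀ i, ∑ j, γ i j = ρ i) ∧
      (∀ j, ∑ i, γ i j = ν j)})
    (KL : (Fin M → Fin M → ℝ) → ℝ)
    (hKL : KL = fun γ => ∑ i, ∑ j, γ i j * Real.log (γ i j / γbar i j)) :
    ∃ γstar ∈ S,
      (∀ γ ∈ S, KL γstar ≤ KL γ) ∧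
      (∀ γ ∈ S, KL γ ≤ KL γstar → γ = γstar) ∧
      ∃ a b : Fin M → ℝ, (∀ i, 0 ≤ a i) ∧ (∀ j, 0 ≤ b j) ∧
        ∀ i j, γstar i j = a i * b j * γbar i j := by
  -- KL in terms of klF
  have hKLF : ∀ γ : Fin M → Fin M → ℝ, KL γ = ∑ p, ∑ q, klF (γbar p q) (γ p q) := by
    intro γ; rw [hKL]
    exact Finset.sum_congr rfl fun p _ => Finset.sum_congr rfl fun q _ =>
      klaux_rw _ _ (hγbar p q)
  -- S is nonempty
  have hne : S.Nonempty := by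
    refine ⟨fun i j => ρ i * ν j, ?_⟩
    rw [hS]
    refine ⟨fun i j => le_of_lt (mul_pos (hρ i) (hν j)), fun i => ?_, fun j => ?_⟩
    · rw [← Finset.mul_sum, hν1, mul_one]
    · rw [← Finset.sum_mul, hρ1, one_mul]
  -- S is compact
  have hScomp : IsCompact S := by
    rw [Metric.isCompact_iff_isClosed_bounded]
    constructor
    · rw [hS]
      have e : {γ : Fin M → Fin M → ℝ | (∀ i j, 0 ≤ γ i j) ∧ (∀ i, ∑ j, γ i j = ρ i) ∧
          (∀ j, ∑ i, γ i j = ν j)} =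
          (⋂ i, ⋂ j, {γ : Fin M → Fin M → ℝ | 0 ≤ γ i j}) ∩
          ((⋂ i, {γ : Fin M → Fin M → ℝ | ∑ j, γ i j = ρ i}) ∩
           (⋂ j, {γ : Fin M → Fin M → ℝ | ∑ i, γ i j = ν j})) := by
        ext γ; simp [Set.mem_iInter]
      rw [e]
      have hcont : ∀ i j : Fin M, Continuous fun γ : Fin M → Fin M → ℝ => γ i j :=
        fun i j => (continuous_apply j).comp (continuous_apply i)
      refine IsClosed.inter ?_ (IsClosed.inter ?_ ?_)
      · exact isClosed_iInter fun i => isClosed_iInter fun j =>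
          isClosed_le continuous_const (hcont i j)
      · exact isClosed_iInter fun i => isClosed_eq
          (continuous_finset_sum _ fun j _ => hcont i j) continuous_const
      · exact isClosed_iInter fun j => isClosed_eq
          (continuous_finset_sum _ fun i _ => hcont i j) continuous_const
    · rw [isBounded_iff_forall_norm_le]
      refine ⟨1, fun γ hγ => ?_⟩
      rw [hS] at hγ
      obtain ⟨hnn, hrow, _⟩ := hγ
      rw [pi_norm_le_iff_of_nonneg zero_le_one]
      intro i
      rw [pi_norm_le_iff_of_nonneg zero_le_one]
      intro j
      rw [Real.norm_eq_abs, abs_le]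
      constructor
      · linarith [hnn i j]
      · have h1 : γ i j ≤ ∑ j', γ i j' :=
          Finset.single_le_sum (fun j' _ => hnn i j') (Finset.mem_univ j)
        have h2 : ρ i ≤ ∑ i', ρ i' :=
          Finset.single_le_sum (fun i' _ => (hρ i').le) (Finset.mem_univ i)
        rw [hrow i] at h1; rw [hρ1] at h2; linarith
  -- KL is continuous
  have hKLcont : Continuous KL := by
    have : KL = fun γ => ∑ p, ∑ q, klF (γbar p q) (γ p q) := funext hKLF
    rw [this]
    exact continuous_finset_sum _ fun p _ => continuous_finset_sum _ fun q _ =>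
      (klF_continuous _).comp ((continuous_apply q).comp (continuous_apply p))
  -- minimizer
  obtain ⟨γstar, hγS, hmin⟩ := hScomp.exists_isMinOn hne hKLcont.continuousOn
  have hmin' : ∀ γ ∈ S, KL γstar ≤ KL γ := fun γ hγ => hmin hγ
  obtain ⟨hnn, hrow, hcol⟩ : (∀ i j, 0 ≤ γstar i j) ∧ (∀ i, ∑ j, γstar i j = ρ i) ∧
      (∀ j, ∑ i, γstar i j = ν j) := by rw [hS] at hγS; exact hγS
  -- perturbation stays in S
  have hδmem : ∀ (i k j l : Fin M) (t : ℝ),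
      (∀ a b, 0 ≤ γstar a b + t * klδ i k j l a b) →
      (fun a b => γstar a b + t * klδ i k j l a b) ∈ S := by
    intro i k j l t hnn'
    rw [hS]
    refine ⟨hnn', fun a => ?_, fun b => ?_⟩
    · rw [Finset.sum_add_distrib, hrow a, ← Finset.mul_sum, klδ_row, mul_zero, add_zero]
    · rw [Finset.sum_add_distrib, hcol b, ← Finset.mul_sum, klδ_col, mul_zero, add_zero]
  -- positivity of the minimizer
  have hpos : ∀ p q, 0 < γstar p q := by
    intro p q
    by_contra hnot
    have h0 : γstar p q = 0 := le_antisymm (not_lt.1 hnot) (hnn p q)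
    obtain ⟨q', hq'⟩ : ∃ q', 0 < γstar p q' := by
      by_contra hq'; push_neg at hq'
      have : ∑ b, γstar p b ≤ 0 := Finset.sum_nonpos fun b _ => hq' b
      rw [hrow p] at this
      exact absurd this (not_le.2 (hρ p))
    obtain ⟨p', hp'⟩ : ∃ p', 0 < γstar p' q := by
      by_contra hp'; push_neg at hp'
      have : ∑ a, γstar a q ≤ 0 := Finset.sum_nonpos fun a _ => hp' a
      rw [hcol q] at this
      exact absurd this (not_le.2 (hν q))
    have hqq' : q ≠ q' := by rintro rfl; rw [h0] at hq'; exact lt_irrefl 0 hq'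
    have hpp' : p ≠ p' := by rintro rfl; rw [h0] at hp'; exact lt_irrefl 0 hp'
    obtain ⟨hd1, hd2, hd3, hd4, hd0⟩ := klδ_vals p p' q q' hpp' hqq'
    set x1 : ℝ := γstar p q' with hx1
    set x2 : ℝ := γstar p' q with hx2
    set x3 : ℝ := γstar p' q' with hx3
    set G : ℝ → ℝ := fun t =>
      (klF (γbar p q) (0 + t*1) - klF (γbar p q) 0)
      + ((klF (γbar p q') (x1 + t*(-1)) - klF (γbar p q') x1)
      + (klF (γbar p' q) (x2 + t*(-1)) - klF (γbar p' q) x2)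
      + (klF (γbar p' q') (x3 + t*1) - klF (γbar p' q') x3)) with hG
    -- KL difference equals G
    have hKLdiff : ∀ t : ℝ,
        KL (fun a b => γstar a b + t * klδ p p' q q' a b) - KL γstar = G t := by
      intro t
      rw [hKLF, hKLF, ← Finset.sum_sub_distrib]
      have : ∀ a, (∑ q_1, klF (γbar a q_1) (γstar a q_1 + t * klδ p p' q q' a q_1))
          - ∑ q_1, klF (γbar a q_1) (γstar a q_1)
          = ∑ q_1, (klF (γbar a q_1) (γstar a q_1 + t * klδ p p' q q' a q_1)
            - klF (γbar a q_1) (γstar a q_1)) := fun a => (Finset.sum_sub_distrib _ _).symm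
      rw [Finset.sum_congr rfl fun a _ => this a]
      rw [klaux_four_sum p p' q q' hpp' hqq' _
        (fun a b hab => by rw [hd0 a b hab, mul_zero, add_zero, sub_self])]
      rw [hG]
      simp only [hd1, hd2, hd3, hd4, h0, ← hx1, ← hx2, ← hx3]
      ring
    -- slope tends to -infinity
    have hs1 := klaux_zero_slope (γbar p q)
    have hs2 := klaux_slope_tendsto (γbar p q') x1 (-1) hq'
    have hs3 := klaux_slope_tendsto (γbar p' q) x2 (-1) hp'
    have hGdiv : ∀ t : ℝ, G t / t =
        (klF (γbar p q) (0 + t*1) - klF (γbar p q) 0) / t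
        + ((klF (γbar p q') (x1 + t*(-1)) - klF (γbar p q') x1) / t
        + (klF (γbar p' q) (x2 + t*(-1)) - klF (γbar p' q) x2) / t
        + (klF (γbar p' q') (x3 + t*1) - klF (γbar p' q') x3) / t) := by
      intro t; rw [hG]; ring
    have hslope : Tendsto (fun t => G t / t) (nhdsWithin 0 (Set.Ioi 0)) atBot := by
      have heq : (fun t => G t / t) = fun t =>
          (klF (γbar p q) (0 + t*1) - klF (γbar p q) 0) / t
          + ((klF (γbar p q') (x1 + t*(-1)) - klF (γbar p q') x1) / t
          + (klF (γbar p' q) (x2 + t*(-1)) - klF (γbar p' q) x2) / t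
          + (klF (γbar p' q') (x3 + t*1) - klF (γbar p' q') x3) / t) := funext hGdiv
      rw [heq]
      rcases lt_or_eq_of_le (hnn p' q') with hx3pos | hx3zero
      · -- x3 > 0 : last three terms converge
        have hs4 := klaux_slope_tendsto (γbar p' q') x3 1 hx3pos
        have hrest := (hs2.add hs3).add hs4
        set L := (-1) * (Real.log x1 + 1 - Real.log (γbar p q'))
          + (-1) * (Real.log x2 + 1 - Real.log (γbar p' q))
          + 1 * (Real.log x3 + 1 - Real.log (γbar p' q')) with hL
        exact tendsto_atBot_add_right_of_ge' _ (L + 1) hs1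
          (hrest.eventually (eventually_le_nhds (lt_add_one L)))
      · -- x3 = 0 : last term also tends to -infinity
        have hs4 : Tendsto (fun t : ℝ =>
            (klF (γbar p' q') (x3 + t*1) - klF (γbar p' q') x3) / t)
            (nhdsWithin 0 (Set.Ioi 0)) atBot := by
          have hx30 : x3 = 0 := by rw [hx3, ← hx3zero]
          rw [hx30]
          exact klaux_zero_slope _
        have hrest : Tendsto (fun t : ℝ =>
            (klF (γbar p q') (x1 + t*(-1)) - klF (γbar p q') x1) / t
            + (klF (γbar p' q) (x2 + t*(-1)) - klF (γbar p' q) x2) / t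
            + (klF (γbar p' q') (x3 + t*1) - klF (γbar p' q') x3) / t)
            (nhdsWithin 0 (Set.Ioi 0)) atBot := by
          set L2 := (-1) * (Real.log x1 + 1 - Real.log (γbar p q'))
            + (-1) * (Real.log x2 + 1 - Real.log (γbar p' q)) with hL2
          exact tendsto_atBot_add_left_of_ge' _ (L2 + 1)
            ((hs2.add hs3).eventually (eventually_le_nhds (lt_add_one L2))) hs4
        exact tendsto_atBot_add_right_of_ge' _ 0 hs1
          (hrest.eventually (eventually_le_atBot 0))
    -- pick a small t
    have hev1 : ∀ᶠ t in nhdsWithin 0 (Set.Ioi 0), G t / t ≤ -1 :=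
      hslope.eventually (eventually_le_atBot (-1))
    have hev2 : ∀ᶠ t in nhdsWithin 0 (Set.Ioi 0), t < min x1 x2 :=
      ((eventually_lt_nhds (lt_min hq' hp')).filter_mono nhdsWithin_le_nhds)
    have hev3 : ∀ᶠ t in nhdsWithin 0 (Set.Ioi 0), (0:ℝ) < t := self_mem_nhdsWithin
    obtain ⟨t, h1, h2, h3⟩ := (hev1.and (hev2.and hev3)).exists
    have htx1 : t ≤ x1 := le_of_lt (lt_of_lt_of_le h2 (min_le_left _ _))
    have htx2 : t ≤ x2 := le_of_lt (lt_of_lt_of_le h2 (min_le_right _ _))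
    have hmemt : (fun a b => γstar a b + t * klδ p p' q q' a b) ∈ S := by
      apply hδmem
      intro a b
      rcases eq_or_ne a p with rfl | hap
      · rcases eq_or_ne b q with rfl | hbq
        · rw [h0, hd1]; linarith
        · rcases eq_or_ne b q' with rfl | hbq'
          · rw [hd3, ← hx1]; linarith
          · rw [hd0 a b (Or.inr ⟨hbq, hbq'⟩), mul_zero, add_zero]; exact hnn a b
      · rcases eq_or_ne a p' with rfl | hap'
        · rcases eq_or_ne b q with rfl | hbq
          · rw [hd4, ← hx2]; linarith
          · rcases eq_or_ne b q' with rfl | hbq'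
            · rw [hd2, ← hx3]; have := hnn a b; rw [← hx3] at this; linarith
            · rw [hd0 a b (Or.inr ⟨hbq, hbq'⟩), mul_zero, add_zero]; exact hnn a b
        · rw [hd0 a b (Or.inl ⟨hap, hap'⟩), mul_zero, add_zero]; exact hnn a b
    have hGt : G t < 0 := by
      have := (div_le_iff₀ h3).1 h1
      nlinarith
    have hle := hmin' _ hmemt
    have := hKLdiff t
    linarith
  -- first-order conditions
  have hu : ∀ i k j l : Fin M,
      (Real.log (γstar i j) - Real.log (γbar i j))
        + (Real.log (γstar k l) - Real.log (γbar k l))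
      = (Real.log (γstar i l) - Real.log (γbar i l))
        + (Real.log (γstar k j) - Real.log (γbar k j)) := by
    intro i k j l
    rcases eq_or_ne i k with rfl | hik
    · ring
    rcases eq_or_ne j l with rfl | hjl
    · ring
    obtain ⟨hd1, hd2, hd3, hd4, hd0⟩ := klδ_vals i k j l hik hjl
    set ε : ℝ := min (min (γstar i j) (γstar i l)) (min (γstar k j) (γstar k l)) with hε
    have hεpos : 0 < ε := lt_min (lt_min (hpos i j) (hpos i l)) (lt_min (hpos k j) (hpos k l))
    have hεij : ε ≤ γstar i j := le_trans (min_le_left _ _) (min_le_left _ _)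
    have hεil : ε ≤ γstar i l := le_trans (min_le_left _ _) (min_le_right _ _)
    have hεkj : ε ≤ γstar k j := le_trans (min_le_right _ _) (min_le_left _ _)
    have hεkl : ε ≤ γstar k l := le_trans (min_le_right _ _) (min_le_right _ _)
    set h' : ℝ → ℝ := fun t => ∑ a, ∑ b, klF (γbar a b) (γstar a b + t * klδ i k j l a b)
      with hh'
    have h'0 : h' 0 = KL γstar := by
      rw [hh', hKLF]
      simp
    have hlocal : IsLocalMin h' 0 := by
      unfold IsLocalMin IsMinFilter
      filter_upwards [eventually_abs_sub_lt 0 hεpos] with t ht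
      rw [sub_zero] at ht
      rw [abs_lt] at ht
      have hmem : (fun a b => γstar a b + t * klδ i k j l a b) ∈ S := by
        apply hδmem
        intro a b
        rcases eq_or_ne a i with rfl | hai
        · rcases eq_or_ne b j with rfl | hbj
          · rw [hd1]; linarith
          · rcases eq_or_ne b l with rfl | hbl
            · rw [hd3]; linarith
            · rw [hd0 a b (Or.inr ⟨hbj, hbl⟩), mul_zero, add_zero]; exact hnn a b
        · rcases eq_or_ne a k with rfl | hak
          · rcases eq_or_ne b j with rfl | hbj
            · rw [hd4]; linarith
            · rcases eq_or_ne b l with rfl | hbl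
              · rw [hd2]; linarith
              · rw [hd0 a b (Or.inr ⟨hbj, hbl⟩), mul_zero, add_zero]; exact hnn a b
          · rw [hd0 a b (Or.inl ⟨hai, hak⟩), mul_zero, add_zero]; exact hnn a b
      have : h' t = KL (fun a b => γstar a b + t * klδ i k j l a b) := (hKLF _).symm
      rw [h'0, this]
      exact hmin' _ hmem
    have hD : HasDerivAt h'
        (∑ a, ∑ b, klδ i k j l a b * (Real.log (γstar a b) + 1 - Real.log (γbar a b))) 0 :=
      HasDerivAt.fun_sum fun a _ => HasDerivAt.fun_sum fun b _ =>
        klaux_hasDeriv (γbar a b) (γstar a b) (klδ i k j l a b) (hpos a b)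
    have hD0 : (∑ a, ∑ b, klδ i k j l a b
        * (Real.log (γstar a b) + 1 - Real.log (γbar a b))) = 0 := by
      rw [← hD.deriv]; exact hlocal.deriv_eq_zero
    rw [klδ_mul_sum i k j l
      (fun a b => Real.log (γstar a b) + 1 - Real.log (γbar a b))] at hD0
    linarith
  -- uniqueness via strict convexity
  have hKL2 : ∀ γ : Fin M → Fin M → ℝ,
      KL γ = ∑ pq : Fin M × Fin M, klF (γbar pq.1 pq.2) (γ pq.1 pq.2) := by
    intro γ; rw [hKLF, Fintype.sum_prod_type]
  have huniq : ∀ γ ∈ S, KL γ ≤ KL γstar → γ = γstar := by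
    intro γ hγ hle
    by_contra hne'
    obtain ⟨p0, hp0⟩ : ∃ p0, γ p0 ≠ γstar p0 := by
      by_contra h; push_neg at h; exact hne' (funext h)
    obtain ⟨q0, hq0⟩ : ∃ q0, γ p0 q0 ≠ γstar p0 q0 := by
      by_contra h; push_neg at h; exact hp0 (funext h)
    obtain ⟨hnn2, hrow2, hcol2⟩ : (∀ i j, 0 ≤ γ i j) ∧ (∀ i, ∑ j, γ i j = ρ i) ∧
        (∀ j, ∑ i, γ i j = ν j) := by rw [hS] at hγ; exact hγ
    set m : Fin M → Fin M → ℝ := fun a b => (γ a b + γstar a b) / 2 with hm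
    have hmS : m ∈ S := by
      rw [hS]
      refine ⟨fun a b => ?_, fun a => ?_, fun b => ?_⟩
      · simp only [hm]; have := hnn2 a b; have := hnn a b; positivity
      · simp only [hm]
        rw [← Finset.sum_div, Finset.sum_add_distrib, hrow2 a, hrow a]; ring
      · simp only [hm]
        rw [← Finset.sum_div, Finset.sum_add_distrib, hcol2 b, hcol b]; ring
    have hstrict : KL m < (KL γ + KL γstar) / 2 := by
      rw [hKL2, hKL2, hKL2, ← Finset.sum_add_distrib, Finset.sum_div]
      simp only [hm]
      apply Finset.sum_lt_sum
      · intro pq _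
        exact klaux_mid_le _ _ _ (hnn2 pq.1 pq.2) (hnn pq.1 pq.2)
      · exact ⟨(p0, q0), Finset.mem_univ _,
          klaux_mid_lt _ _ _ (hnn2 p0 q0) (hnn p0 q0) hq0⟩
    have := hmin' m hmS
    linarith
  -- product form
  have i0 : Fin M := ⟨0, hM⟩
  refine ⟨γstar, hγS, hmin', huniq,
    (fun i => Real.exp ((Real.log (γstar i i0) - Real.log (γbar i i0))
      - (Real.log (γstar i0 i0) - Real.log (γbar i0 i0)))),
    (fun j => Real.exp (Real.log (γstar i0 j) - Real.log (γbar i0 j))),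
    fun i => (Real.exp_pos _).le, fun j => (Real.exp_pos _).le, ?_⟩
  intro i j
  rw [← Real.exp_add]
  have hrel := hu i i0 j i0
  have : (Real.log (γstar i i0) - Real.log (γbar i i0))
      - (Real.log (γstar i0 i0) - Real.log (γbar i0 i0))
      + (Real.log (γstar i0 j) - Real.log (γbar i0 j))
      = Real.log (γstar i j) - Real.log (γbar i j) := by linarith
  rw [this, Real.exp_sub, Real.exp_log (hpos i j), Real.exp_log (hγbar i j),
    div_mul_cancel₀ _ (hγbar i j).ne']
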